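/- Let U ⊆ ℝⁿ (or ℂⁿ) be open, let f_1, …, f_k : U → ℝ be twice continuously differentiable and A_1, …, A_n : U → ℝ continuously differentiable, and suppose that Δ := det((∂f_ℓ/∂x_m)_{1≤ℓ,m≤k}) is nonvanishing on U. For i = k+1, …, n let m_i be the determinant of the (k+1)×(k+1) matrix whose first k rows are (∂f_ℓ/∂x_1, …, ∂f_ℓ/∂x_k, ∂f_ℓ/∂x_i), ℓ = 1, …, k, and whose last row is (A_1, …, A_k, A_i). For j = k+1, …, n and a differentiable function g on U define D_j g := ∂g/∂x_j + Σ_{ℓ=1}^{k} (−1)^{k+ℓ+1} (1/Δ) · J_{ℓ,j} · ∂g/∂x_ℓ, where J_{ℓ,j} is the Jacobian determinant of (f_1, …, f_k) with respect to the variables (x_1, …, x_{ℓ−1}, x_{ℓ+1}, …, x_k, x_j). Then for each i, j ∈ {k+1, …, n} one has D_j(m_i/Δ) = (1/Δ³) · det of the (k+2)×(k+2) matrix whose rows are (Δ, ∂Δ/∂x_1, …, ∂Δ/∂x_k, ∂Δ/∂x_j), then (0, ∂f_ℓ/∂x_1, …, ∂f_ℓ/∂x_k, ∂f_ℓ/∂x_j)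 for ℓ = 1, …, k, and finally (m_i, ∂m_i/∂x_1, …, ∂m_i/∂x_k, ∂m_i/∂x_j). -/

import Mathlib

/-- The partial derivative `∂g/∂x_m` of a function `g` on `ℝⁿ`. -/
noncomputable def pd {n : ℕ} (g : (Fin n → ℝ) → ℝ) (m : Fin n) (x : Fin n → ℝ) : ℝ :=
  fderiv ℝ g x (Pi.single m 1)

private lemma pd_div {n : ℕ} (g h : (Fin n → ℝ) → ℝ) (x : Fin n → ℝ) (v : Fin n)
    (hg : DifferentiableAt ℝ g x) (hh : DifferentiableAt ℝ h x) (h0 : h x ≠ 0) :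
    pd (fun y => g y / h y) v x
      = (h x * pd g v x - g x * pd h v x) / (h x) ^ 2 := by
  have hinv : DifferentiableAt ℝ (fun y => (h y)⁻¹) x := hh.inv h0
  have hfi : fderiv ℝ (fun y => (h y)⁻¹) x (Pi.single v 1)
      = -((h x)⁻¹ * fderiv ℝ h x (Pi.single v 1) * (h x)⁻¹) := by
    have heq : (fun y => (h y)⁻¹) = Inv.inv ∘ h := rfl
    rw [heq, fderiv_comp (x := x) (differentiableAt_inv h0) hh]
    simp [fderiv_inv' h0]
  simp only [pd, div_eq_mul_inv]
  rw [fderiv_fun_mul hg hinv]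
  simp only [ContinuousLinearMap.add_apply, ContinuousLinearMap.smul_apply, smul_eq_mul, hfi]
  field_simp
  ring

private lemma diffAt_det {N m : ℕ} (x : Fin N → ℝ) (M : (Fin N → ℝ) → Matrix (Fin m) (Fin m) ℝ)
    (h : ∀ r c, DifferentiableAt ℝ (fun y => M y r c) x) :
    DifferentiableAt ℝ (fun y => (M y).det) x := by
  simp only [Matrix.det_apply']
  refine DifferentiableAt.fun_sum fun σ _ => DifferentiableAt.const_mul ?_ _
  exact (HasFDerivAt.finset_prod (u := Finset.univ) (g := fun r y => M y (σ r) r)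
    (fun r _ => (h (σ r) r).hasFDerivAt)).differentiableAt

private lemma diffAt_pd {N : ℕ} {U : Set (Fin N → ℝ)} (hU : IsOpen U) {g : (Fin N → ℝ) → ℝ}
    (hg : ContDiffOn ℝ 2 g U) {x : Fin N → ℝ} (hx : x ∈ U) (v : Fin N) :
    DifferentiableAt ℝ (fun y => pd g v y) x := by
  have h1 : ContDiffAt ℝ 1 (fderiv ℝ g) x :=
    (hg.contDiffAt (hU.mem_nhds hx)).fderiv_right (by norm_num)
  have h2 : DifferentiableAt ℝ (fderiv ℝ g) x := h1.differentiableAt one_ne_zero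
  exact (ContinuousLinearMap.apply ℝ ℝ (Pi.single v (1:ℝ))).differentiableAt.comp x h2


private lemma det_expand {k : ℕ} (dd mm : ℝ) (dr q : Fin (k+1) → ℝ) (F : Fin k → Fin (k+1) → ℝ) :
    (Matrix.of fun (r c : Fin (k+2)) =>
        if h0 : (r:ℕ) = 0 then
          (if (c:ℕ) = 0 then dd else dr ⟨(c:ℕ)-1, by have := c.isLt; omega⟩)
        else if hk : (r:ℕ) ≤ k then
          (if (c:ℕ) = 0 then 0
           else F ⟨(r:ℕ)-1, by omega⟩ ⟨(c:ℕ)-1, by have := c.isLt; omega⟩)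
        else
          (if (c:ℕ) = 0 then mm else q ⟨(c:ℕ)-1, by have := c.isLt; omega⟩)).det
      = dd * (∑ z : Fin (k+1), (-1:ℝ)^(k+(z:ℕ)) * q z *
            (Matrix.of fun (r c' : Fin k) => F r (z.succAbove c')).det)
        + (-1:ℝ)^(k+1) * mm *
          (∑ z : Fin (k+1), (-1:ℝ)^((z:ℕ)) * dr z *
            (Matrix.of fun (r c' : Fin k) => F r (z.succAbove c')).det) := by
  set K : Fin (k+1) → ℝ :=
    fun z => (Matrix.of fun (r c' : Fin k) => F r (z.succAbove c')).det with hK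
  set N : Matrix (Fin (k+2)) (Fin (k+2)) ℝ := Matrix.of (fun r c =>
      if h0 : (r:ℕ) = 0 then
        (if (c:ℕ) = 0 then dd else dr ⟨(c:ℕ)-1, by have := c.isLt; omega⟩)
      else if hk : (r:ℕ) ≤ k then
        (if (c:ℕ) = 0 then 0
         else F ⟨(r:ℕ)-1, by omega⟩ ⟨(c:ℕ)-1, by have := c.isLt; omega⟩)
      else
        (if (c:ℕ) = 0 then mm else q ⟨(c:ℕ)-1, by have := c.isLt; omega⟩)) with hN
  have hN00 : N 0 0 = dd := by
    simp [hN]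
  have hNm0 : N (Fin.last (k+1)) 0 = mm := by
    simp only [hN, Matrix.of_apply, Fin.val_last, Fin.val_zero]
    rw [dif_neg (by omega), dif_neg (by omega)]
    simp
  have hzero : ∀ r : Fin k, N r.castSucc.succ 0 = 0 := by
    intro r
    simp only [hN, Matrix.of_apply, Fin.val_succ, Fin.coe_castSucc, Fin.val_zero]
    rw [dif_neg (by omega), dif_pos (by have := r.isLt; omega)]
    simp
  have hFsub : ∀ (z : Fin (k+1)) (row : Fin k → Fin (k+2)), (∀ r, ((row r):ℕ) = (r:ℕ)+1) →
      (Matrix.of fun (r c' : Fin k) => N (row r) ((z.succAbove c').succ)).det = K z := by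
    intro z row hrow
    simp only [hK]
    congr 1
    ext r c'
    simp only [Matrix.of_apply, hN, Fin.val_succ, hrow]
    rw [dif_neg (by omega), dif_pos (by have := r.isLt; omega), if_neg (by omega)]
    simp
  have hM0 : (N.submatrix Fin.succ Fin.succ).det
      = ∑ z : Fin (k+1), (-1:ℝ)^(k+(z:ℕ)) * q z * K z := by
    rw [Matrix.det_succ_row _ (Fin.last k)]
    refine Finset.sum_congr rfl fun z _ => ?_
    have h1 : (N.submatrix Fin.succ Fin.succ) (Fin.last k) z = q z := by
      simp only [Matrix.submatrix_apply, hN, Matrix.of_apply, Fin.val_succ, Fin.val_last]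
      rw [dif_neg (by omega), dif_neg (by omega), if_neg (by omega)]
      simp
    have h2 : ((N.submatrix Fin.succ Fin.succ).submatrix
        (Fin.last k).succAbove z.succAbove).det = K z := by
      rw [Fin.succAbove_last]
      rw [show (N.submatrix Fin.succ Fin.succ).submatrix Fin.castSucc z.succAbove
          = Matrix.of (fun (r c' : Fin k) => N ((r.castSucc).succ) ((z.succAbove c').succ))
          from rfl]
      exact hFsub z _ (fun r => by simp)
    rw [h1, h2, Fin.val_last]
  have hM1 : (N.submatrix Fin.castSucc Fin.succ).det
      = ∑ z : Fin (k+1), (-1:ℝ)^((z:ℕ)) * dr z * K z := by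
    rw [Matrix.det_succ_row_zero]
    refine Finset.sum_congr rfl fun z _ => ?_
    have h1 : (N.submatrix Fin.castSucc Fin.succ) 0 z = dr z := by
      simp only [Matrix.submatrix_apply, Fin.castSucc_zero, hN, Matrix.of_apply,
        Fin.val_succ, Fin.val_zero]
      rw [if_neg (by omega)]
      simp
    have h2 : ((N.submatrix Fin.castSucc Fin.succ).submatrix Fin.succ z.succAbove).det
        = K z := by
      rw [show (N.submatrix Fin.castSucc Fin.succ).submatrix Fin.succ z.succAbove
          = Matrix.of (fun (r c' : Fin k) => N ((r.succ).castSucc) ((z.succAbove c').succ))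
          from rfl]
      exact hFsub z _ (fun r => by simp)
    rw [h1, h2]
  rw [Matrix.det_succ_column_zero N, Fin.sum_univ_succ, Fin.sum_univ_castSucc]
  simp only [hzero, mul_zero, zero_mul, Finset.sum_const_zero, zero_add]
  rw [Fin.succ_last, Fin.succAbove_last, Fin.succAbove_zero, hM0, hM1, hN00, hNm0]
  simp only [Fin.val_zero, pow_zero, one_mul, Fin.val_last]
  rfl

/-- **Derivative along the level set of the coefficients of the restricted 1-form.**
Let `U ⊆ ℝⁿ` be open, `f_1, …, f_k` be `C²` on `U`, `A_1, …, A_n` be `C¹` on `U`,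
and suppose the leading Jacobian minor `Δ = det(∂f_ℓ/∂x_m)_{1≤ℓ,m≤k}` does not
vanish on `U`.  For `i > k` let `m_i` be the `(k+1) × (k+1)` minor of the Jacobian
matrix augmented by the row `(A_1, …, A_n)`, on the columns `1, …, k, i`.  For
`j > k` let `D_j g = ∂g/∂x_j + Σ_ℓ (-1)^(k+ℓ+1) Δ⁻¹ J_{ℓ,j} ∂g/∂x_ℓ`, where
`J_{ℓ,j} = ∂(f_1,…,f_k)/∂(x_1,…,x_{ℓ-1},x_{ℓ+1},…,x_k,x_j)`.  Then on `U`
`D_j (m_i/Δ)` equals `Δ⁻³` times the determinant of the `(k+2) × (k+2)` matrix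
with rows `(Δ, ∂Δ/∂x_1, …, ∂Δ/∂x_k, ∂Δ/∂x_j)`, `(0, ∂f_ℓ/∂x_1, …, ∂f_ℓ/∂x_k, ∂f_ℓ/∂x_j)`
for `ℓ = 1, …, k`, and `(m_i, ∂m_i/∂x_1, …, ∂m_i/∂x_k, ∂m_i/∂x_j)`. -/
theorem deriv_of_restricted_oneForm_coeff
    {n k : ℕ} (hkn : k ≤ n)
    (U : Set (Fin n → ℝ)) (hU : IsOpen U)
    (f : Fin k → (Fin n → ℝ) → ℝ) (A : Fin n → (Fin n → ℝ) → ℝ)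
    (hf : ∀ ℓ, ContDiffOn ℝ 2 (f ℓ) U)
    (hA : ∀ i, ContDiffOn ℝ 1 (A i) U)
    (Δ : (Fin n → ℝ) → ℝ)
    (hΔdef : Δ = fun x =>
      (Matrix.of fun (ℓ m : Fin k) => pd (f ℓ) (Fin.castLE hkn m) x).det)
    (hΔ : ∀ x ∈ U, Δ x ≠ 0)
    (m_ : Fin n → (Fin n → ℝ) → ℝ)
    (hm : ∀ i : Fin n, m_ i = fun x =>
      (Matrix.of fun (r c : Fin (k + 1)) =>
        (fun col : Fin n =>
          if hr : (r : ℕ) < k then pd (f ⟨(r : ℕ), hr⟩) col x else A col x)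
        (if hc : (c : ℕ) < k then Fin.castLE hkn ⟨(c : ℕ), hc⟩ else i)).det)
    (J : Fin k → Fin n → (Fin n → ℝ) → ℝ)
    (hJ : ∀ (ℓ : Fin k) (j : Fin n), J ℓ j = fun x =>
      (Matrix.of fun (r c : Fin k) =>
        pd (f r)
          (if (c : ℕ) < (ℓ : ℕ) then Fin.castLE hkn c
           else if h2 : (c : ℕ) + 1 < k then Fin.castLE hkn ⟨(c : ℕ) + 1, h2⟩
           else j) x).det)
    (D : Fin n → ((Fin n → ℝ) → ℝ) → (Fin n → ℝ) → ℝ)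
    (hD : ∀ (j : Fin n) (g : (Fin n → ℝ) → ℝ) (x : Fin n → ℝ),
      D j g x = pd g j x +
        ∑ ℓ : Fin k, (-1 : ℝ) ^ (k + ((ℓ : ℕ) + 1) + 1) * (Δ x)⁻¹ * J ℓ j x *
          pd g (Fin.castLE hkn ℓ) x) :
    ∀ (i j : Fin n), k ≤ (i : ℕ) → k ≤ (j : ℕ) → ∀ x ∈ U,
      D j (fun y => m_ i y / Δ y) x =
        ((Δ x) ^ 3)⁻¹ *
          (Matrix.of fun (r c : Fin (k + 2)) =>
            if hr0 : (r : ℕ) = 0 then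
              (if (c : ℕ) = 0 then Δ x
               else if hc : (c : ℕ) - 1 < k then
                 pd Δ (Fin.castLE hkn ⟨(c : ℕ) - 1, hc⟩) x
               else pd Δ j x)
            else if hrk : (r : ℕ) ≤ k then
              (if (c : ℕ) = 0 then 0
               else if hc : (c : ℕ) - 1 < k then
                 pd (f ⟨(r : ℕ) - 1, by omega⟩) (Fin.castLE hkn ⟨(c : ℕ) - 1, hc⟩) x
               else pd (f ⟨(r : ℕ) - 1, by omega⟩) j x)
            else
              (if (c : ℕ) = 0 then m_ i x
               else if hc : (c : ℕ) - 1 < k then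
                 pd (m_ i) (Fin.castLE hkn ⟨(c : ℕ) - 1, hc⟩) x
               else pd (m_ i) j x)).det := by

  intro i j hki hkj x hx
  have hΔx : Δ x ≠ 0 := hΔ x hx
  set colj : Fin (k+1) → Fin n :=
    fun c => if hc : (c:ℕ) < k then Fin.castLE hkn ⟨(c:ℕ), hc⟩ else j with hcolj
  have hcolcast : ∀ c : Fin k, colj c.castSucc = Fin.castLE hkn c := by
    intro c
    simp only [hcolj, Fin.coe_castSucc, c.isLt, dif_pos]
  have hcollast : colj (Fin.last k) = j := by
    simp [hcolj]
  have hdf : ∀ (ℓ : Fin k) (v : Fin n), DifferentiableAt ℝ (fun y => pd (f ℓ) v y) x :=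
    fun ℓ v => diffAt_pd hU (hf ℓ) hx v
  have hdΔ : DifferentiableAt ℝ Δ x := by
    rw [hΔdef]
    exact diffAt_det x _ (fun r c => hdf r _)
  have hdm : DifferentiableAt ℝ (m_ i) x := by
    rw [hm i]
    refine diffAt_det x _ (fun r c => ?_)
    simp only [Matrix.of_apply]
    by_cases hr : (r:ℕ) < k
    · simp only [hr, dif_pos]
      exact hdf _ _
    · simp only [hr, dif_neg, not_false_iff]
      exact ((hA _).differentiableOn one_ne_zero).differentiableAt (hU.mem_nhds hx)
  have hpdq : ∀ v : Fin n, pd (fun y => m_ i y / Δ y) v x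
      = (Δ x * pd (m_ i) v x - m_ i x * pd Δ v x) / (Δ x)^2 :=
    fun v => pd_div _ _ _ _ hdm hdΔ hΔx
  rw [hD j _ x]
  simp only [hpdq]
  -- minors of the Jacobian used in the expansion
  set G : Fin (k+1) → ℝ :=
    fun c₀ => (Matrix.of fun (r c : Fin k) => pd (f r) (colj (c₀.succAbove c)) x).det with hGdef
  have hGcast : ∀ ℓ : Fin k, G ℓ.castSucc = J ℓ j x := by
    intro ℓ
    simp only [hJ ℓ j, hGdef]
    congr 1
    ext r c
    simp only [Matrix.of_apply]
    rcases lt_or_ge (c:ℕ) (ℓ:ℕ) with h | h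
    · rw [Fin.succAbove_castSucc_of_lt _ _ (by exact h), hcolcast, if_pos h]
    · rw [Fin.succAbove_castSucc_of_le _ _ (by exact h), if_neg (by omega)]
      simp only [hcolj, Fin.val_succ]
  have hGlast : G (Fin.last k) = Δ x := by
    simp only [hGdef, hΔdef]
    congr 1
    ext r c
    simp only [Matrix.of_apply]
    rw [Fin.succAbove_last_apply, hcolcast]

  set dr : Fin (k+1) → ℝ := fun z => pd Δ (colj z) x with hdr
  set qq : Fin (k+1) → ℝ := fun z => pd (m_ i) (colj z) x with hqq
  set FF : Fin k → Fin (k+1) → ℝ := fun ℓ z => pd (f ℓ) (colj z) x with hFF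
  have hmx : (Matrix.of fun (r c : Fin (k + 2)) =>
      if hr0 : (r : ℕ) = 0 then
        (if (c : ℕ) = 0 then Δ x
         else if hc : (c : ℕ) - 1 < k then
           pd Δ (Fin.castLE hkn ⟨(c : ℕ) - 1, hc⟩) x
         else pd Δ j x)
      else if hrk : (r : ℕ) ≤ k then
        (if (c : ℕ) = 0 then 0
         else if hc : (c : ℕ) - 1 < k then
           pd (f ⟨(r : ℕ) - 1, by omega⟩) (Fin.castLE hkn ⟨(c : ℕ) - 1, hc⟩) x
         else pd (f ⟨(r : ℕ) - 1, by omega⟩) j x)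
      else
        (if (c : ℕ) = 0 then m_ i x
         else if hc : (c : ℕ) - 1 < k then
           pd (m_ i) (Fin.castLE hkn ⟨(c : ℕ) - 1, hc⟩) x
         else pd (m_ i) j x))
      = Matrix.of (fun (r c : Fin (k+2)) =>
        if h0 : (r:ℕ) = 0 then
          (if (c:ℕ) = 0 then Δ x else dr ⟨(c:ℕ)-1, by have := c.isLt; omega⟩)
        else if hk2 : (r:ℕ) ≤ k then
          (if (c:ℕ) = 0 then 0
           else FF ⟨(r:ℕ)-1, by omega⟩ ⟨(c:ℕ)-1, by have := c.isLt; omega⟩)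
        else
          (if (c:ℕ) = 0 then m_ i x
           else qq ⟨(c:ℕ)-1, by have := c.isLt; omega⟩)) := by
    ext r c
    simp only [Matrix.of_apply, hdr, hqq, hFF, hcolj]
    split_ifs <;> first | rfl | omega
  rw [hmx, det_expand (Δ x) (m_ i x) dr qq FF]
  have hKG : ∀ z : Fin (k+1),
      (Matrix.of fun (r c' : Fin k) => FF r (z.succAbove c')).det = G z := fun z => rfl
  simp only [hKG]
  rw [Fin.sum_univ_castSucc, Fin.sum_univ_castSucc]
  simp only [hqq, hdr, hcolcast, hcollast, hGcast, hGlast, Fin.coe_castSucc, Fin.val_last]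
  have hs1 : ∀ c : ℕ, ((-1:ℝ))^(k + (c + 1) + 1) = (-1)^k * (-1)^c := by
    intro c
    rw [pow_add, pow_add, pow_succ]
    ring
  have hs2 : ∀ c : ℕ, ((-1:ℝ))^(k + c) = (-1)^k * (-1)^c := fun c => pow_add _ _ _
  have hs3 : ((-1:ℝ))^(k + 1) = (-1)^k * (-1) := pow_succ _ _
  simp only [hs1, hs2, hs3, pow_one]
  have hcomb : ∀ S1 S2 t1 t2 : ℝ,
      ((Δ x)^3)⁻¹ * (Δ x * (S1 + t1) + (-1:ℝ)^k * (-1) * m_ i x * (S2 + t2))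
        = (((Δ x)^3)⁻¹ * (Δ x * S1 + (-1:ℝ)^k * (-1) * m_ i x * S2))
          + (((Δ x)^3)⁻¹ * (Δ x * t1 + (-1:ℝ)^k * (-1) * m_ i x * t2)) := by
    intro S1 S2 t1 t2
    ring
  rw [hcomb]
  have hsum : (((Δ x)^3)⁻¹ * (Δ x * (∑ ℓ : Fin k, (-1:ℝ)^k * (-1)^(ℓ:ℕ)
        * pd (m_ i) (Fin.castLE hkn ℓ) x * J ℓ j x)
      + (-1:ℝ)^k * (-1) * m_ i x * (∑ ℓ : Fin k, (-1:ℝ)^(ℓ:ℕ)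
        * pd Δ (Fin.castLE hkn ℓ) x * J ℓ j x)))
      = ∑ ℓ : Fin k, (((Δ x)^3)⁻¹ * (Δ x * ((-1:ℝ)^k * (-1)^(ℓ:ℕ)
          * pd (m_ i) (Fin.castLE hkn ℓ) x * J ℓ j x)
        + (-1:ℝ)^k * (-1) * m_ i x * ((-1:ℝ)^(ℓ:ℕ)
          * pd Δ (Fin.castLE hkn ℓ) x * J ℓ j x))) := by
    rw [Finset.mul_sum, Finset.mul_sum, ← Finset.sum_add_distrib, Finset.mul_sum]
  rw [hsum]
  have hterm : ∀ ℓ : Fin k, (-1:ℝ)^k * (-1)^(ℓ:ℕ) * (Δ x)⁻¹ * J ℓ j x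
        * ((Δ x * pd (m_ i) (Fin.castLE hkn ℓ) x - m_ i x * pd Δ (Fin.castLE hkn ℓ) x) / (Δ x)^2)
      = (((Δ x)^3)⁻¹ * (Δ x * ((-1:ℝ)^k * (-1)^(ℓ:ℕ)
          * pd (m_ i) (Fin.castLE hkn ℓ) x * J ℓ j x)
        + (-1:ℝ)^k * (-1) * m_ i x * ((-1:ℝ)^(ℓ:ℕ)
          * pd Δ (Fin.castLE hkn ℓ) x * J ℓ j x))) := by
    intro ℓ
    field_simp
    ring
  simp only [hterm]
  have hconst : (Δ x * pd (m_ i) j x - m_ i x * pd Δ j x) / (Δ x)^2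
      = ((Δ x)^3)⁻¹ * (Δ x * ((-1:ℝ)^k * (-1)^k * pd (m_ i) j x * Δ x)
        + (-1:ℝ)^k * (-1) * m_ i x * ((-1:ℝ)^k * pd Δ j x * Δ x)) := by
    have he : ((-1:ℝ)^k) * ((-1:ℝ)^k) = 1 := by
      rw [← pow_add, Even.neg_one_pow ⟨k, by ring⟩]
    field_simp
    linear_combination (m_ i x * pd Δ j x - Δ x * pd (m_ i) j x) * he
  rw [hconst]
  ring
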